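/- For every μ ∈ (0, 1) and all γ₁, γ₂ > 0, the Kullback–Leibler divergence between the Bernoulli distributions with parameters f(μ, γ₁) and f(μ, γ₂) satisfies D(f(μ, γ₁) ‖ f(μ, γ₂)) ≥ (√γ₁ − √γ₂)² · μ(1 − μ) / max{(γ₁ + γ₂)/2, 1}². -/

import Mathlib

/-- The declaration probability function `f(μ, γ) = γμ/(1 + (γ − 1)μ)`. -/
noncomputable def declProb (μ γ : ℝ) : ℝ := γ * μ / (1 + (γ - 1) * μ)

/-- Kullback–Leibler divergence between `Bernoulli(p)` and `Bernoulli(q)`: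
`D(p ‖ q) = p·log(p/q) + (1 − p)·log((1 − p)/(1 − q))`. -/
noncomputable def klBernoulli (p q : ℝ) : ℝ :=
  p * Real.log (p / q) + (1 - p) * Real.log ((1 - p) / (1 - q))

-- log y ≥ 1 - 1/y for y > 0
lemma one_sub_inv_le_log (y : ℝ) (hy : 0 < y) : 1 - 1/y ≤ Real.log y := by
  have h := Real.log_le_sub_one_of_pos (show (0:ℝ) < 1/y by positivity)
  rw [Real.log_div one_ne_zero (ne_of_gt hy), Real.log_one] at h
  linarith

-- a * log(a/b) ≥ 2a - 2√(ab)
lemma mul_log_ge (a b : ℝ) (ha : 0 < a) (hb : 0 < b) :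
    2*a - 2*Real.sqrt (a*b) ≤ a * Real.log (a/b) := by
  have hsa : Real.sqrt a > 0 := Real.sqrt_pos.mpr ha
  have hsb : Real.sqrt b > 0 := Real.sqrt_pos.mpr hb
  have h1 : Real.log (a/b) = 2 * Real.log (Real.sqrt (a/b)) := by
    rw [Real.log_sqrt (by positivity)]; ring
  have h2 : 1 - 1/Real.sqrt (a/b) ≤ Real.log (Real.sqrt (a/b)) :=
    one_sub_inv_le_log _ (Real.sqrt_pos.mpr (by positivity))
  have h3 : Real.sqrt (a/b) = Real.sqrt a / Real.sqrt b := Real.sqrt_div ha.le b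
  have h4 : Real.sqrt (a*b) = Real.sqrt a * Real.sqrt b := Real.sqrt_mul ha.le b
  have hsa2 : Real.sqrt a ^ 2 = a := Real.sq_sqrt ha.le
  have hsb2 : Real.sqrt b ^ 2 = b := Real.sq_sqrt hb.le
  rw [h1, h3]
  rw [h3] at h2
  have h5 : a * (1 - 1/(Real.sqrt a / Real.sqrt b)) ≤ a * Real.log (Real.sqrt a / Real.sqrt b) :=
    mul_le_mul_of_nonneg_left h2 ha.le
  have h6 : a * (1 - 1/(Real.sqrt a / Real.sqrt b)) = a - Real.sqrt a * Real.sqrt b := by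
    field_simp
    nlinarith [hsa2]
  rw [h4]
  linarith [h5, h6]

set_option maxHeartbeats 1000000 in
lemma core (μ s t M R : ℝ) (hμ0 : 0 < μ) (hμ1 : μ < 1) (hs : 0 < s) (ht : 0 < t)
    (hM1 : (1:ℝ) ≤ M) (hMg : (s ^ 2 + t ^ 2) / 2 ≤ M) (hR0 : 0 < R)
    (hR2 : R ^ 2 = (1 + (s ^ 2 - 1) * μ) * (1 + (t ^ 2 - 1) * μ)) :
    (s - t) ^ 2 * (μ * (1 - μ)) / M ^ 2
      ≤ 2 - 2 * (μ * (s * t) / R) - 2 * ((1 - μ) / R) := by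
  have hμ1' : (0:ℝ) < 1 - μ := by linarith
  set c := μ * (s * t) + (1 - μ) with hc
  have hc0 : 0 < c := by nlinarith [mul_pos hs ht]
  have hsq : c ^ 2 ≤ R ^ 2 := by
    nlinarith [mul_nonneg (mul_pos hμ0 hμ1').le (sq_nonneg (s - t))]
  have hcR : c ≤ R := by nlinarith
  have hRM : R ≤ M := by
    have h2 : R ^ 2 ≤ M ^ 2 := by
      nlinarith [sq_nonneg ((1 + (s ^ 2 - 1) * μ) - (1 + (t ^ 2 - 1) * μ)),
        mul_self_le_mul_self (show (0:ℝ) ≤ ((1 + (s ^ 2 - 1) * μ) + (1 + (t ^ 2 - 1) * μ)) / 2 by nlinarith [mul_pos (mul_pos hs hs) hμ0, mul_pos (mul_pos ht ht) hμ0])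
          (show ((1 + (s ^ 2 - 1) * μ) + (1 + (t ^ 2 - 1) * μ)) / 2 ≤ M by nlinarith [mul_le_mul_of_nonneg_left hMg hμ0.le, mul_le_mul_of_nonneg_left hM1 hμ1'.le])]
    nlinarith
  have hlhs : 2 - 2 * (μ * (s * t) / R) - 2 * ((1 - μ) / R) = 2 * (R - c) / R := by
    field_simp; ring
  rw [hlhs, div_le_div_iff₀ (by positivity) hR0]
  have hid : (s - t) ^ 2 * (μ * (1 - μ)) = (R - c) * (R + c) := by nlinarith
  rw [hid]
  have hRc : 0 ≤ R - c := sub_nonneg.mpr hcR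
  nlinarith [mul_nonneg hRc (mul_nonneg hR0.le hc0.le),
    mul_le_mul_of_nonneg_left (mul_le_mul hRM hRM hR0.le (by linarith : (0:ℝ) ≤ M)) hRc]

set_option maxHeartbeats 1000000 in
/-- For every `μ ∈ (0, 1)` and all `γ₁, γ₂ > 0`, the KL divergence between
the Bernoulli distributions with parameters `f(μ, γ₁)` and `f(μ, γ₂)` satisfies
`D(f(μ, γ₁) ‖ f(μ, γ₂)) ≥ (√γ₁ − √γ₂)² · μ(1 − μ) / max{(γ₁ + γ₂)/2, 1}²`. -/
theorem klBernoulli_declProb_lower_bound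
    (μ γ₁ γ₂ : ℝ) (hμ : μ ∈ Set.Ioo (0 : ℝ) 1) (hγ₁ : 0 < γ₁) (hγ₂ : 0 < γ₂) :
    (Real.sqrt γ₁ - Real.sqrt γ₂) ^ 2 * (μ * (1 - μ)) / max ((γ₁ + γ₂) / 2) 1 ^ 2
      ≤ klBernoulli (declProb μ γ₁) (declProb μ γ₂) := by
  obtain ⟨hμ0, hμ1⟩ := hμ
  have hμ1' : (0:ℝ) < 1 - μ := by linarith
  set s := Real.sqrt γ₁ with hs
  set t := Real.sqrt γ₂ with ht
  have hs2 : s ^ 2 = γ₁ := Real.sq_sqrt hγ₁.le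
  have ht2 : t ^ 2 = γ₂ := Real.sq_sqrt hγ₂.le
  have hs0 : 0 < s := Real.sqrt_pos.mpr hγ₁
  have ht0 : 0 < t := Real.sqrt_pos.mpr hγ₂
  clear_value s t
  set D₁ := 1 + (γ₁ - 1) * μ with hD₁def
  set D₂ := 1 + (γ₂ - 1) * μ with hD₂def
  have hD₁ : 0 < D₁ := by nlinarith [mul_pos hγ₁ hμ0]
  have hD₂ : 0 < D₂ := by nlinarith [mul_pos hγ₂ hμ0]
  set p := declProb μ γ₁ with hpdef
  set q := declProb μ γ₂ with hqdef
  have hp : p = γ₁ * μ / D₁ := rfl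
  have hq : q = γ₂ * μ / D₂ := rfl
  have hkl : klBernoulli p q
      = p * Real.log (p / q) + (1 - p) * Real.log ((1 - p) / (1 - q)) := rfl
  clear_value p q
  have hp0 : 0 < p := hp ▸ div_pos (mul_pos hγ₁ hμ0) hD₁
  have hq0 : 0 < q := hq ▸ div_pos (mul_pos hγ₂ hμ0) hD₂
  have hp1 : 1 - p = (1 - μ) / D₁ := by rw [hp]; field_simp; ring
  have hq1 : 1 - q = (1 - μ) / D₂ := by rw [hq]; field_simp; ring
  have hp1' : 0 < 1 - p := hp1 ▸ div_pos hμ1' hD₁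
  have hq1' : 0 < 1 - q := hq1 ▸ div_pos hμ1' hD₂
  set M := max ((γ₁ + γ₂) / 2) 1 with hM
  have hM1 : (1:ℝ) ≤ M := le_max_right _ _
  have hMg : (s ^ 2 + t ^ 2) / 2 ≤ M := by rw [hs2, ht2]; exact le_max_left _ _
  clear_value M
  have hDD : 0 < D₁ * D₂ := mul_pos hD₁ hD₂
  set R := Real.sqrt (D₁ * D₂) with hR
  have hR0 : 0 < R := Real.sqrt_pos.mpr hDD
  have hR2' : R ^ 2 = D₁ * D₂ := Real.sq_sqrt hDD.le
  have hR2 : R ^ 2 = (1 + (s ^ 2 - 1) * μ) * (1 + (t ^ 2 - 1) * μ) := by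
    rw [hR2', hs2, ht2]
  clear_value R
  have key : 2 - 2 * Real.sqrt (p * q) - 2 * Real.sqrt ((1 - p) * (1 - q))
      ≤ klBernoulli p q := by
    have h1 := mul_log_ge p q hp0 hq0
    have h2 := mul_log_ge (1 - p) (1 - q) hp1' hq1'
    rw [hkl]; linarith
  have hsqrt1 : Real.sqrt (p * q) = μ * (s * t) / R := by
    rw [show p * q = (μ * (s * t) / R) ^ 2 by
      rw [hp, hq]; field_simp; rw [hR2', hs2, ht2]; ring]
    exact Real.sqrt_sq (by positivity)
  have hsqrt2 : Real.sqrt ((1 - p) * (1 - q)) = (1 - μ) / R := by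
    rw [show (1 - p) * (1 - q) = ((1 - μ) / R) ^ 2 by
      rw [hp1, hq1]; field_simp; rw [hR2']]
    exact Real.sqrt_sq (by positivity)
  rw [hsqrt1, hsqrt2] at key
  have halg := core μ s t M R hμ0 hμ1 hs0 ht0 hM1 hMg hR0 hR2
  linarith [halg, key]
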